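/- Let λ ∈ ℂ. There exists a nonzero ℂ^{ℓ+1}-valued polynomial function F satisfying s(1−s)F″(s) + (B − s·C)F′(s) + (Λ₀ − λ)F(s) = 0 for all s ∈ ℝ if and only if λ = −n(n+2) for some nonnegative integer n. -/

import Mathlib

namespace Stmt8

/-- `B = Σ_j (j+3/2) E_{jj} - Σ_{j=0}^{ℓ-1} (j+1) E_{j,j+1}`. -/
noncomputable def Bmat (ℓ : ℕ) : Matrix (Fin (ℓ+1)) (Fin (ℓ+1)) ℂ :=
  Matrix.of fun j k =>
    if j = k then ((j:ℕ):ℂ) + 3/2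
    else if (j:ℕ) + 1 = (k:ℕ) then -(((j:ℕ):ℂ) + 1)
    else 0

/-- `C = Σ_j (2j+3) E_{jj}`. -/
noncomputable def Cmat (ℓ : ℕ) : Matrix (Fin (ℓ+1)) (Fin (ℓ+1)) ℂ :=
  Matrix.diagonal fun j => 2*((j:ℕ):ℂ) + 3

/-- `Λ₀ = -Σ_j j(j+2) E_{jj}`. -/
noncomputable def Lam0 (ℓ : ℕ) : Matrix (Fin (ℓ+1)) (Fin (ℓ+1)) ℂ :=
  Matrix.diagonal fun j => -(((j:ℕ):ℂ) * (((j:ℕ):ℂ) + 2))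

/-- The `ℂ^{ℓ+1}`-valued function determined by a vector of polynomials. -/
def polyFun (ℓ : ℕ) (q : Fin (ℓ+1) → Polynomial ℂ) : ℝ → Fin (ℓ+1) → ℂ :=
  fun s j => (q j).eval (s:ℂ)

/-- The matrix hypergeometric equation
`s(1-s)F'' + (B - sC)F' + (Λ₀ - λ)F = 0` for all real `s`. -/
def SatisfiesODE (ℓ : ℕ) (lam : ℂ) (q : Fin (ℓ+1) → Polynomial ℂ) : Prop :=
  ∀ s : ℝ,
    ((s:ℂ) * (1 - (s:ℂ))) • deriv (deriv (polyFun ℓ q)) s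
      + (Bmat ℓ - (s:ℂ) • Cmat ℓ).mulVec (deriv (polyFun ℓ q) s)
      + (Lam0 ℓ - lam • (1 : Matrix (Fin (ℓ+1)) (Fin (ℓ+1)) ℂ)).mulVec (polyFun ℓ q s) = 0

open Polynomial

/-- "Next" polynomial, or zero at the top index. -/
noncomputable def qsucc (ℓ : ℕ) (q : Fin (ℓ+1) → Polynomial ℂ) (j : Fin (ℓ+1)) : Polynomial ℂ :=
  if h : (j:ℕ)+1 < ℓ+1 then q ⟨(j:ℕ)+1, h⟩ else 0

/-- The polynomial form of the `j`-th component of the ODE. -/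
noncomputable def Pode (ℓ : ℕ) (lam : ℂ) (q : Fin (ℓ+1) → Polynomial ℂ) (j : Fin (ℓ+1)) :
    Polynomial ℂ :=
  X * (1 - X) * derivative (derivative (q j))
    + (C (((j:ℕ):ℂ) + 3/2) - C (2*((j:ℕ):ℂ) + 3) * X) * derivative (q j)
    - C (((j:ℕ):ℂ) + 1) * derivative (qsucc ℓ q j)
    + C (-(((j:ℕ):ℂ) * (((j:ℕ):ℂ) + 2)) - lam) * (q j)

lemma polyFun_hasDerivAt (ℓ : ℕ) (q : Fin (ℓ+1) → Polynomial ℂ) (s : ℝ) :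
    HasDerivAt (polyFun ℓ q) (polyFun ℓ (fun j => derivative (q j)) s) s := by
  rw [hasDerivAt_pi]
  intro j
  exact ((q j).hasDerivAt ((s:ℂ))).comp_ofReal

lemma deriv_polyFun (ℓ : ℕ) (q : Fin (ℓ+1) → Polynomial ℂ) :
    deriv (polyFun ℓ q) = polyFun ℓ (fun j => derivative (q j)) := by
  funext s
  exact (polyFun_hasDerivAt ℓ q s).deriv

lemma Bmat_mulVec (ℓ : ℕ) (v : Fin (ℓ+1) → ℂ) (j : Fin (ℓ+1)) :
    (Bmat ℓ).mulVec v j = (((j:ℕ):ℂ) + 3/2) * v j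
      - (((j:ℕ):ℂ) + 1) * (if h : (j:ℕ)+1 < ℓ+1 then v ⟨(j:ℕ)+1, h⟩ else 0) := by
  classical
  have hsplit : ∀ k : Fin (ℓ+1),
      (Bmat ℓ) j k * v k
        = (if j = k then (((j:ℕ):ℂ) + 3/2) * v k else 0)
          + (if (j:ℕ)+1 = (k:ℕ) then -((((j:ℕ):ℂ) + 1) * v k) else 0) := by
    intro k
    simp only [Bmat, Matrix.of_apply]
    by_cases h1 : j = k
    · subst h1
      simp [(by omega : ¬ ((j:ℕ)+1 = (j:ℕ)))]
    · by_cases h2 : (j:ℕ)+1 = (k:ℕ) <;> simp [h1, h2] <;> ring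
  have hmv : (Bmat ℓ).mulVec v j = ∑ k, (Bmat ℓ) j k * v k := rfl
  rw [hmv]
  rw [Finset.sum_congr rfl (fun k _ => hsplit k), Finset.sum_add_distrib,
    Finset.sum_ite_eq Finset.univ j (fun k => (((j:ℕ):ℂ) + 3/2) * v k)]
  simp only [Finset.mem_univ, if_true]
  by_cases h : (j:ℕ)+1 < ℓ+1
  · have hk : ∀ k : Fin (ℓ+1), ((j:ℕ)+1 = (k:ℕ)) ↔ ((⟨(j:ℕ)+1, h⟩ : Fin (ℓ+1)) = k) := by
      intro k; rw [Fin.ext_iff]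
    simp_rw [hk]
    rw [Finset.sum_ite_eq Finset.univ (⟨(j:ℕ)+1, h⟩ : Fin (ℓ+1))
      (fun k => -((((j:ℕ):ℂ) + 1) * v k))]
    simp only [Finset.mem_univ, if_true, dif_pos h]
    ring
  · have hk : ∀ k : Fin (ℓ+1), ¬ ((j:ℕ)+1 = (k:ℕ)) := by
      intro k; have := k.isLt; omega
    rw [dif_neg h]
    simp [hk]

lemma ode_eval (ℓ : ℕ) (lam : ℂ) (q : Fin (ℓ+1) → Polynomial ℂ) (s : ℝ) (j : Fin (ℓ+1)) :
    (((s:ℂ) * (1 - (s:ℂ))) • deriv (deriv (polyFun ℓ q)) s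
      + (Bmat ℓ - (s:ℂ) • Cmat ℓ).mulVec (deriv (polyFun ℓ q) s)
      + (Lam0 ℓ - lam • (1 : Matrix (Fin (ℓ+1)) (Fin (ℓ+1)) ℂ)).mulVec (polyFun ℓ q s)) j
    = (Pode ℓ lam q j).eval ((s:ℂ)) := by
  rw [deriv_polyFun, deriv_polyFun]
  have hsucc : (if h : (j:ℕ)+1 < ℓ+1
        then polyFun ℓ (fun i => derivative (q i)) s ⟨(j:ℕ)+1, h⟩ else 0)
      = (derivative (qsucc ℓ q j)).eval ((s:ℂ)) := by
    unfold qsucc polyFun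
    split <;> simp
  simp only [Matrix.sub_mulVec, Matrix.smul_mulVec, Pi.add_apply, Pi.sub_apply,
    Pi.smul_apply, smul_eq_mul, Bmat_mulVec, Cmat, Lam0, Matrix.mulVec_diagonal,
    Matrix.one_mulVec, hsucc]
  simp only [Pode, polyFun, eval_add, eval_sub, eval_mul, eval_C, eval_X, eval_one]
  ring

lemma ode_iff (ℓ : ℕ) (lam : ℂ) (q : Fin (ℓ+1) → Polynomial ℂ) :
    SatisfiesODE ℓ lam q ↔ ∀ j, Pode ℓ lam q j = 0 := by
  constructor
  · intro hs j
    apply Polynomial.eq_zero_of_infinite_isRoot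
    apply Set.Infinite.mono (s := Set.range (fun s : ℝ => (s:ℂ)))
    · rintro _ ⟨s, rfl⟩
      have := congrFun (hs s) j
      rw [ode_eval] at this
      simpa [Polynomial.IsRoot] using this
    · exact Set.infinite_range_of_injective Complex.ofReal_injective
  · intro h s
    funext j
    rw [Pi.zero_apply, ode_eval, h j, Polynomial.eval_zero]

/-! ### Hypergeometric polynomial construction -/

/-- Coefficients of the terminating hypergeometric series `₂F₁(-n, n+2; 3/2; s)`. -/
noncomputable def hgc (n : ℕ) : ℕ → ℂ
  | 0 => 1
  | (k+1) => ((k:ℂ) - (n:ℂ)) * ((k:ℂ) + (n:ℂ) + 2) / (((k:ℂ)+1) * ((k:ℂ)+3/2)) * hgc n k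

lemma hgc_rec (n k : ℕ) :
    ((k:ℂ)+1) * ((k:ℂ)+3/2) * hgc n (k+1)
      = ((k:ℂ) - (n:ℂ)) * ((k:ℂ) + (n:ℂ) + 2) * hgc n k := by
  have h1 : ((k:ℂ)+1) ≠ 0 := by
    have h := Nat.cast_ne_zero (R := ℂ).2 (Nat.succ_ne_zero k)
    push_cast at h
    exact h
  have h2 : ((k:ℂ)+3/2) ≠ 0 := by
    have h := Nat.cast_ne_zero (R := ℂ).2 (show 2*k+3 ≠ 0 by omega)
    have e : ((k:ℂ)+3/2) = (((2*k+3 : ℕ):ℂ))/2 := by push_cast; ring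
    rw [e]
    exact div_ne_zero h two_ne_zero
  have hD : (((k:ℂ)+1) * ((k:ℂ)+3/2)) ≠ 0 := mul_ne_zero h1 h2
  have key : ∀ (a b c : ℂ), b ≠ 0 → b * (a / b * c) = a * c := by
    intro a b c hb
    field_simp
  rw [hgc]
  exact key _ _ _ hD

lemma hgc_eq_zero (n k : ℕ) (h : n < k) : hgc n k = 0 := by
  induction k with
  | zero => omega
  | succ m ih =>
    rcases Nat.lt_or_ge n m with hm | hm
    · rw [hgc, ih hm, mul_zero]
    · have hnm : n = m := by omega
      subst hnm
      rw [hgc]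
      simp

/-- The terminating hypergeometric polynomial. -/
noncomputable def hgp (n : ℕ) : Polynomial ℂ :=
  ∑ k ∈ Finset.range (n+1), C (hgc n k) * X^k

lemma hgp_coeff (n m : ℕ) : (hgp n).coeff m = hgc n m := by
  unfold hgp
  rw [Polynomial.finset_sum_coeff]
  simp only [Polynomial.coeff_C_mul, Polynomial.coeff_X_pow, mul_ite, mul_one, mul_zero]
  rw [Finset.sum_ite_eq (Finset.range (n+1)) m (fun k => hgc n k)]
  split
  · rfl
  · next h =>
    rw [Finset.mem_range] at h
    exact (hgc_eq_zero n m (by omega)).symm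

lemma hgp_ne_zero (n : ℕ) : hgp n ≠ 0 := by
  intro h
  have := hgp_coeff n 0
  rw [h] at this
  simp [hgc] at this

lemma hgp_ode (n : ℕ) :
    X * (1 - X) * derivative (derivative (hgp n))
      + (C ((3:ℂ)/2) - C (3:ℂ) * X) * derivative (hgp n)
      + C ((n:ℂ) * ((n:ℂ) + 2)) * hgp n = 0 := by
  have hsplit : X * (1 - X) * derivative (derivative (hgp n))
      + (C ((3:ℂ)/2) - C (3:ℂ) * X) * derivative (hgp n)
      + C ((n:ℂ) * ((n:ℂ) + 2)) * hgp n
    = X * derivative (derivative (hgp n)) - X * (X * derivative (derivative (hgp n)))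
      + C ((3:ℂ)/2) * derivative (hgp n) - C (3:ℂ) * (X * derivative (hgp n))
      + C ((n:ℂ) * ((n:ℂ) + 2)) * hgp n := by ring
  rw [hsplit]
  apply Polynomial.ext
  intro m
  match m with
  | 0 =>
    have h0 := hgc_rec n 0
    norm_num at h0
    simp only [coeff_add, coeff_sub, coeff_C_mul, Polynomial.mul_coeff_zero, coeff_X_zero,
      coeff_derivative, hgp_coeff, coeff_zero, zero_mul, Polynomial.coeff_C_zero]
    norm_num
    linear_combination h0
  | 1 =>
    have h1 := hgc_rec n 1
    norm_num at h1
    simp only [coeff_add, coeff_sub, coeff_C_mul, coeff_X_mul, Polynomial.mul_coeff_zero,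
      coeff_X_zero, coeff_derivative, hgp_coeff, coeff_zero, zero_mul,
      Polynomial.coeff_C_zero]
    norm_num
    linear_combination h1
  | (m+2) =>
    have h2 := hgc_rec n (m+2)
    simp only [coeff_add, coeff_sub, coeff_C_mul, coeff_X_mul, coeff_derivative, hgp_coeff,
      coeff_zero]
    push_cast at h2 ⊢
    linear_combination h2

/-! ### Extracting the top coefficient -/

lemma exists_top_coeff (ℓ : ℕ) (q : Fin (ℓ+1) → Polynomial ℂ) (hq : q ≠ 0) :
    ∃ N : ℕ, (∀ (j : Fin (ℓ+1)) (k : ℕ), N < k → (q j).coeff k = 0)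
      ∧ ∃ j0 : Fin (ℓ+1), (q j0).coeff N ≠ 0 := by
  classical
  refine ⟨Finset.univ.sup (fun j => (q j).natDegree), ?_, ?_⟩
  · intro j k hk
    exact Polynomial.coeff_eq_zero_of_natDegree_lt
      (lt_of_le_of_lt (Finset.le_sup (f := fun j => (q j).natDegree) (Finset.mem_univ j)) hk)
  · obtain ⟨j1, hj1⟩ : ∃ j, q j ≠ 0 := by
      by_contra h
      push_neg at h
      exact hq (funext fun j => h j)
    by_cases hN0 : Finset.univ.sup (fun j : Fin (ℓ+1) => (q j).natDegree) = 0
    · refine ⟨j1, ?_⟩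
      have hd : (q j1).natDegree = 0 := by
        have hle : (q j1).natDegree ≤ Finset.univ.sup (fun j : Fin (ℓ+1) => (q j).natDegree) :=
          Finset.le_sup (f := fun j : Fin (ℓ+1) => (q j).natDegree) (Finset.mem_univ j1)
        rw [hN0] at hle
        exact Nat.le_zero.1 hle
      rw [hN0, ← hd]
      exact Polynomial.leadingCoeff_ne_zero.2 hj1
    · obtain ⟨j0, -, hj0⟩ := Finset.exists_mem_eq_sup Finset.univ
        (Finset.univ_nonempty) (fun j : Fin (ℓ+1) => (q j).natDegree)
      refine ⟨j0, ?_⟩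
      have hqj0 : q j0 ≠ 0 := by
        intro h0
        apply hN0
        rw [hj0, h0, Polynomial.natDegree_zero]
      rw [hj0]
      exact Polynomial.leadingCoeff_ne_zero.2 hqj0

/-! ### Main theorem -/

/-- There is a nonzero `ℂ^{ℓ+1}`-valued polynomial solution of
`s(1-s)F'' + (B - sC)F' + (Λ₀ - λ)F = 0` if and only if `λ = -n(n+2)` for some
nonnegative integer `n`. -/
theorem polynomial_solution_iff (ℓ : ℕ) (lam : ℂ) :
    (∃ q : Fin (ℓ+1) → Polynomial ℂ, q ≠ 0 ∧ SatisfiesODE ℓ lam q) ↔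
      ∃ n : ℕ, lam = -(n:ℂ) * ((n:ℂ) + 2) := by
  constructor
  · rintro ⟨q, hq, hode⟩
    have hP := (ode_iff ℓ lam q).1 hode
    obtain ⟨N, hbig, j0, hj0⟩ := exists_top_coeff ℓ q hq
    have ha1 : (q j0).coeff (N+1) = 0 := hbig j0 (N+1) (by omega)
    have hqs : (qsucc ℓ q j0).coeff (N+1) = 0 := by
      unfold qsucc
      split
      · exact hbig _ _ (by omega)
      · simp
    have hPj := hP j0
    rw [Pode] at hPj
    have hP' : X * derivative (derivative (q j0))
        - X * (X * derivative (derivative (q j0)))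
        + C (((j0:ℕ):ℂ) + 3/2) * derivative (q j0)
        - C (2*((j0:ℕ):ℂ) + 3) * (X * derivative (q j0))
        - C (((j0:ℕ):ℂ) + 1) * derivative (qsucc ℓ q j0)
        + C (-(((j0:ℕ):ℂ) * (((j0:ℕ):ℂ) + 2)) - lam) * (q j0) = 0 := by
      linear_combination hPj
    refine ⟨N + (j0:ℕ), ?_⟩
    have key : (lam + ((N:ℂ) + ((j0:ℕ):ℂ)) * (((N:ℂ) + ((j0:ℕ):ℂ)) + 2)) * (q j0).coeff N
        = 0 := by
      have E := congrArg (fun p => Polynomial.coeff p N) hP'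
      simp only [coeff_zero] at E
      rcases N with _ | _ | m
      · norm_num at ha1 hqs
        simp only [coeff_add, coeff_sub, coeff_C_mul, Polynomial.mul_coeff_zero,
          coeff_X_zero, coeff_derivative, zero_mul, Polynomial.coeff_C_zero] at E
        norm_num [ha1, hqs] at E
        rcases E with E | E
        · push_cast
          linear_combination (-(q j0).coeff 0) * E
        · exact absurd E hj0
      · norm_num at ha1 hqs
        simp only [coeff_add, coeff_sub, coeff_C_mul, coeff_X_mul,
          Polynomial.mul_coeff_zero, coeff_X_zero, coeff_derivative, zero_mul] at E
        norm_num [ha1, hqs] at E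
        simp only [show (0:ℕ)+1 = 1 from rfl]
        push_cast
        linear_combination -E
      · simp only [coeff_add, coeff_sub, coeff_C_mul, coeff_X_mul, coeff_derivative,
          ha1, hqs, mul_zero, zero_mul] at E
        push_cast at E ⊢
        linear_combination -E
    rcases mul_eq_zero.1 key with h | h
    · push_cast
      linear_combination h
    · exact absurd h hj0
  · rintro ⟨n, rfl⟩
    classical
    refine ⟨fun j => if j = 0 then hgp n else 0, ?_, ?_⟩
    · intro h
      have := congrFun h 0
      simp at this
      exact hgp_ne_zero n this
    · rw [ode_iff]
      intro j
      by_cases hj : j = 0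
      · subst hj
        have hq0 : (fun j : Fin (ℓ+1) => if j = 0 then hgp n else 0) 0 = hgp n := by simp
        have hqs : qsucc ℓ (fun j : Fin (ℓ+1) => if j = 0 then hgp n else 0) 0 = 0 := by
          unfold qsucc
          split
          · simp [Fin.ext_iff]
          · rfl
        simp only [Pode, hqs, derivative_zero, mul_zero, sub_zero]
        simp only [eq_self_iff_true, if_true]
        simp only [Fin.val_zero, Nat.cast_zero]
        have e1 : ((0:ℂ) + 3/2) = (3:ℂ)/2 := by norm_num
        have e2 : (2*(0:ℂ) + 3) = (3:ℂ) := by norm_num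
        have e3 : (-((0:ℂ) * ((0:ℂ) + 2)) - (-(n:ℂ) * ((n:ℂ) + 2))) = (n:ℂ) * ((n:ℂ) + 2) := by
          ring
        rw [e1, e2, e3]
        exact hgp_ode n
      · have hqj : (fun j : Fin (ℓ+1) => if j = 0 then hgp n else 0) j = 0 := by simp [hj]
        have hqs : qsucc ℓ (fun j : Fin (ℓ+1) => if j = 0 then hgp n else 0) j = 0 := by
          unfold qsucc
          split
          · exact if_neg (fun h' => Nat.succ_ne_zero _ (congrArg Fin.val h'))
          · rfl
        simp only [Pode, hqs, derivative_zero, mul_zero, sub_zero]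
        rw [if_neg hj]
        simp

end Stmt8
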